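/- arXiv:2505.08968 — 5 statements merged into one kernel-verified Lean document; each statement's English description precedes it below -/
import Mathlib

section
/- Let A be a C*-algebra, let a ∈ A, and let g be a local unit for a. Then for every continuous function f : ℝ → ℝ with f(0) = 0 and f(1) = 1, the element f(g) obtained by applying the non-unital continuous functional calculus to the self-adjoint element g is again a local unit for a. In particular, taking f(t) = min(max(t,0),1), every element of A possessing a local unit possesses a local unit g' with 0 ≤ g' ≤ 1. -/
open scoped ComplexOrder
open scoped ContinuousMapZero

/-- `g` is a local unit for `a`: `g` is self-adjoint and `a * g = g * a = a`. -/
def IsLocalUnit {A : Type*} [NonUnitalRing A] [StarRing A] (g a : A) : Prop :=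
  IsSelfAdjoint g ∧ a * g = a ∧ g * a = a

/-- A state on a C*-algebra: a positive linear functional of norm 1. -/
def IsState {A : Type*} [NonUnitalCStarAlgebra A] [PartialOrder A] [StarOrderedRing A]
    (φ : A →L[ℂ] ℂ) : Prop :=
  ‖φ‖ = 1 ∧ ∀ a : A, 0 ≤ a → 0 ≤ φ a



section Aux

variable {A : Type*} [NonUnitalCStarAlgebra A]

open NonUnitalStarAlgebra in
lemma localUnit_key (a g : A) (hg : IsSelfAdjoint g) (h1 : a * g = a) (h2 : g * a = a)
    (f : ℝ → ℝ) (hf : Continuous f) (hf0 : f 0 = 0) (hf1 : f 1 = 1) :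
    a * cfcₙ f g = a ∧ cfcₙ f g * a = a := by
  rcases eq_or_ne a 0 with rfl | ha
  · simp
  -- 1 belongs to the quasispectrum of `g`
  have hone : (1 : ℝ) ∈ quasispectrum ℝ g := by
    rw [Unitization.quasispectrum_eq_spectrum_inr' ℝ ℂ g, spectrum.mem_iff]
    intro hu
    rw [map_one] at hu
    obtain ⟨u, hu'⟩ := hu
    have hmul : ((1 : Unitization ℂ A) - ↑g) * ↑a = 0 := by
      rw [sub_mul, one_mul, ← Unitization.inr_mul, h2, sub_self]
    have h0 : (↑a : Unitization ℂ A) = 0 := by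
      calc (↑a : Unitization ℂ A) = ↑u⁻¹ * (↑u * ↑a) := by
            rw [← mul_assoc, u.inv_mul, one_mul]
        _ = 0 := by rw [hu', hmul, mul_zero]
    rw [← Unitization.inr_zero ℂ (A := A)] at h0
    exact ha (Unitization.inr_injective h0)
  set one : quasispectrum ℝ g := ⟨1, hone⟩
  -- the set of functions φ for which the claim holds
  set S : Set C(quasispectrum ℝ g, ℝ)₀ :=
    {φ | a * cfcₙHom hg φ = φ one • a ∧ cfcₙHom hg φ * a = φ one • a} with hS
  have hSclosed : IsClosed S := by
    apply IsClosed.inter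
    · exact isClosed_eq (by fun_prop (disch := exact cfcₙHom_continuous hg))
        (by exact (continuous_eval_const (F := C(quasispectrum ℝ g, ℝ)₀) one).smul continuous_const)
    · exact isClosed_eq (by fun_prop (disch := exact cfcₙHom_continuous hg))
        (by exact (continuous_eval_const (F := C(quasispectrum ℝ g, ℝ)₀) one).smul continuous_const)
  have hid : (⟨.restrict (quasispectrum ℝ g) (.id ℝ), rfl⟩ : C(quasispectrum ℝ g, ℝ)₀) ∈ S := by
    constructor <;> simp [show (⟨.restrict (quasispectrum ℝ g) (.id ℝ), rfl⟩ : C(quasispectrum ℝ g, ℝ)₀) = ContinuousMapZero.id _ from rfl, cfcₙHom_id hg, h1, h2, one]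
  have hadj : (adjoin ℝ {(⟨.restrict (quasispectrum ℝ g) (.id ℝ), rfl⟩ :
      C(quasispectrum ℝ g, ℝ)₀)} : Set C(quasispectrum ℝ g, ℝ)₀) ⊆ S := by
    rintro φ hφ
    induction hφ using adjoin_induction with
    | mem x hx => rw [Set.mem_singleton_iff] at hx; exact hx ▸ hid
    | add x y hx hy hx' hy' =>
      have he : (x + y) one = x one + y one := rfl
      refine ⟨?_, ?_⟩ <;>
      rw [map_add] <;>
      simp only [mul_add, add_mul, hx'.1, hy'.1, hx'.2, hy'.2, he, add_smul]
    | zero => simp [hS]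
    | mul x y hx hy hx' hy' =>
      have he : (x * y) one = x one * y one := rfl
      constructor
      · rw [map_mul, ← mul_assoc, hx'.1, smul_mul_assoc, hy'.1, he, smul_smul]
      · rw [map_mul, mul_assoc, hy'.2, mul_smul_comm, hx'.2, he, smul_smul, mul_comm]
    | smul r x hx hx' =>
      have he : (r • x) one = r * x one := rfl
      refine ⟨?_, ?_⟩ <;>
      rw [map_smul] <;>
      simp only [mul_smul_comm, smul_mul_assoc, hx'.1, hx'.2, he, smul_smul]
    | star x hx hx' =>
      rw [star_trivial]; exact hx'
  have hdense : Dense (adjoin ℝ {(⟨.restrict (quasispectrum ℝ g) (.id ℝ), rfl⟩ :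
      C(quasispectrum ℝ g, ℝ)₀)} : Set C(quasispectrum ℝ g, ℝ)₀) :=
    ContinuousMapZero.adjoin_id_dense (quasispectrum ℝ g)
  have hall : ∀ φ : C(quasispectrum ℝ g, ℝ)₀, φ ∈ S := by
    intro φ
    have := hdense.closure_eq
    have hsub : closure (adjoin ℝ {(⟨.restrict (quasispectrum ℝ g) (.id ℝ), rfl⟩ :
        C(quasispectrum ℝ g, ℝ)₀)} : Set C(quasispectrum ℝ g, ℝ)₀) ⊆ S :=
      hSclosed.closure_subset_iff.mpr hadj
    rw [this] at hsub
    exact hsub (Set.mem_univ φ)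
  have hcfc : cfcₙ f g = cfcₙHom hg ⟨⟨_, hf.continuousOn.restrict⟩, hf0⟩ :=
    cfcₙ_apply f g hf.continuousOn hf0 hg
  obtain ⟨e1, e2⟩ := hall ⟨⟨_, hf.continuousOn.restrict⟩, hf0⟩
  constructor
  · rw [hcfc, e1]; show f 1 • a = a; rw [hf1, one_smul]
  · rw [hcfc, e2]; show f 1 • a = a; rw [hf1, one_smul]

end Aux

/-- If `g` is a local unit for `a`, then for every continuous `f : ℝ → ℝ` with
`f 0 = 0` and `f 1 = 1`, the element `f(g)` (non-unital continuous functional calculus)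
is again a local unit for `a`; in particular `a` has a local unit `g'` with `0 ≤ g' ≤ 1`
(equivalently, `0 ≤ g'` and `‖g'‖ ≤ 1`, since `A` may lack a unit). -/
theorem localUnit_cfc {A : Type*} [NonUnitalCStarAlgebra A] [PartialOrder A]
    [StarOrderedRing A] (a g : A) (hg : IsLocalUnit g a) :
    (∀ f : ℝ → ℝ, Continuous f → f 0 = 0 → f 1 = 1 → IsLocalUnit (cfcₙ f g) a) ∧
    ∃ g' : A, IsLocalUnit g' a ∧ 0 ≤ g' ∧ ‖g'‖ ≤ 1 := by
  obtain ⟨hsa, h1, h2⟩ := hg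
  have main : ∀ f : ℝ → ℝ, Continuous f → f 0 = 0 → f 1 = 1 → IsLocalUnit (cfcₙ f g) a := by
    intro f hf hf0 hf1
    obtain ⟨e1, e2⟩ := localUnit_key a g hsa h1 h2 f hf hf0 hf1
    exact ⟨cfcₙ_predicate f g, e1, e2⟩
  refine ⟨main, ?_⟩
  set f : ℝ → ℝ := fun t => min (max t 0) 1 with hf
  have hfc : Continuous f := (continuous_id.max continuous_const).min continuous_const
  have hf0 : f 0 = 0 := by simp [hf]
  have hf1 : f 1 = 1 := by simp [hf]
  refine ⟨cfcₙ f g, main f hfc hf0 hf1, ?_, ?_⟩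
  · exact cfcₙ_nonneg fun x _ => le_min (le_max_right x 0) zero_le_one
  · refine norm_cfcₙ_le fun x _ => ?_
    rw [Real.norm_eq_abs, abs_le]
    refine ⟨le_trans (by norm_num) (le_min (le_max_right x 0) zero_le_one), min_le_right _ _⟩
end

section
/- Let A be a C*-algebra and let (a_j)_{j∈ℕ} be a sequence of positive elements of A. The series Σ_{j=1}^∞ 2^{-j} · a_j/(1+‖a_j‖) converges in norm in A; if g is a local unit for its sum, then g is a local unit for every a_j, j ∈ ℕ. -/
open scoped ComplexOrder

/-- Key lemma: if `0 ≤ c ≤ b` and `g` is a self-adjoint local unit for `b`,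
then `g` is a local unit for `c`. -/
lemma localUnit_of_le {A : Type*} [NonUnitalCStarAlgebra A] [PartialOrder A]
    [StarOrderedRing A] {g b c : A} (hg : IsSelfAdjoint g) (hbg : b * g = b) (hgb : g * b = b)
    (hc : 0 ≤ c) (hcb : c ≤ b) : c * g = c ∧ g * c = c := by
  have hb : 0 ≤ b := hc.trans hcb
  -- move to the unitization
  let u : Unitization ℂ A := 1 - (g : Unitization ℂ A)
  have hu : star u = u := by
    rw [star_sub, star_one, ← Unitization.inr_star, hg.star_eq]
  have hub : u * (b : Unitization ℂ A) * u = 0 := by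
    have h1 : (g : Unitization ℂ A) * (b : Unitization ℂ A) = (b : Unitization ℂ A) := by
      rw [← Unitization.inr_mul ℂ, hgb]
    have h2 : (b : Unitization ℂ A) * (g : Unitization ℂ A) = (b : Unitization ℂ A) := by
      rw [← Unitization.inr_mul ℂ, hbg]
    simp [u, sub_mul, mul_sub, h1, h2]
  have hcb' : (c : Unitization ℂ A) ≤ (b : Unitization ℂ A) :=
    (Unitization.inr_le_iff c b (IsSelfAdjoint.of_nonneg hc) (IsSelfAdjoint.of_nonneg hb)).mpr hcb
  have hc' : (0 : Unitization ℂ A) ≤ (c : Unitization ℂ A) := Unitization.inr_nonneg_iff.mpr hc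
  have hucu : u * (c : Unitization ℂ A) * u = 0 := by
    have h1 : star u * (c : Unitization ℂ A) * u ≤ star u * (b : Unitization ℂ A) * u :=
      star_left_conjugate_le_conjugate hcb' u
    rw [hu, hub] at h1
    have h2 : (0 : Unitization ℂ A) ≤ star u * (c : Unitization ℂ A) * u :=
      star_left_conjugate_nonneg hc' u
    rw [hu] at h2
    exact le_antisymm h1 h2
  -- use the square root
  set d : Unitization ℂ A := CFC.sqrt (c : Unitization ℂ A) with hd
  have hd0 : 0 ≤ d := CFC.sqrt_nonneg _
  have hdd : d * d = (c : Unitization ℂ A) := CFC.sqrt_mul_sqrt_self _ hc'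
  have hdu : d * u = 0 := by
    have : star (d * u) * (d * u) = 0 := by
      rw [star_mul, hu, (IsSelfAdjoint.of_nonneg hd0).star_eq]
      calc u * d * (d * u) = u * (d * d) * u := by noncomm_ring
        _ = 0 := by rw [hdd, hucu]
    exact CStarRing.star_mul_self_eq_zero_iff _ |>.mp this
  have hcu : (c : Unitization ℂ A) * u = 0 := by
    calc (c : Unitization ℂ A) * u = d * (d * u) := by rw [← hdd]; noncomm_ring
      _ = 0 := by rw [hdu, mul_zero]
  have huc : u * (c : Unitization ℂ A) = 0 := by
    have := congrArg star hcu
    rwa [star_mul, hu, (IsSelfAdjoint.of_nonneg hc').star_eq, star_zero] at this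
  constructor
  · have : (c : Unitization ℂ A) * (g : Unitization ℂ A) = (c : Unitization ℂ A) := by
      have := hcu
      simp only [u, mul_sub, mul_one, sub_eq_zero] at this
      exact this.symm
    rw [← Unitization.inr_mul ℂ] at this
    exact Unitization.inr_injective this
  · have : (g : Unitization ℂ A) * (c : Unitization ℂ A) = (c : Unitization ℂ A) := by
      have := huc
      simp only [u, sub_mul, one_mul, sub_eq_zero] at this
      exact this.symm
    rw [← Unitization.inr_mul ℂ] at this
    exact Unitization.inr_injective this

/-- The series `Σ_j 2⁻ʲ • a j / (1 + ‖a j‖)` of positive elements converges in norm,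
and a local unit for its sum is a local unit for every `a j`. -/
theorem localUnit_of_tsum {A : Type*} [NonUnitalCStarAlgebra A] [PartialOrder A]
    [StarOrderedRing A] (a : ℕ → A) (ha : ∀ j, 0 ≤ a j) :
    Summable (fun j : ℕ => ((1 / 2 ^ j) * (1 + ‖a j‖)⁻¹ : ℝ) • a j) ∧
    ∀ g : A, IsLocalUnit g (∑' j : ℕ, ((1 / 2 ^ j) * (1 + ‖a j‖)⁻¹ : ℝ) • a j) →
      ∀ j : ℕ, IsLocalUnit g (a j) := by
  have hr : ∀ j, (0 : ℝ) < (1 / 2 ^ j) * (1 + ‖a j‖)⁻¹ := by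
    intro j
    positivity
  have hcnonneg : ∀ j, 0 ≤ ((1 / 2 ^ j) * (1 + ‖a j‖)⁻¹ : ℝ) • a j := by
    intro j
    rcases (ha j).lt_or_eq with h | h
    · have := smul_lt_smul_of_pos_left h (hr j)
      rw [smul_zero] at this
      exact this.le
    · rw [← h, smul_zero]
  have hsum : Summable (fun j : ℕ => ((1 / 2 ^ j) * (1 + ‖a j‖)⁻¹ : ℝ) • a j) := by
    apply Summable.of_norm_bounded (g := fun j : ℕ => (1 / 2 : ℝ) ^ j) summable_geometric_two
    intro j
    rw [norm_smul]
    have h1 : ‖((1 / 2 ^ j) * (1 + ‖a j‖)⁻¹ : ℝ)‖ = (1 / 2 ^ j) * (1 + ‖a j‖)⁻¹ :=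
      Real.norm_of_nonneg (hr j).le
    rw [h1, mul_assoc]
    calc (1 / 2 ^ j : ℝ) * ((1 + ‖a j‖)⁻¹ * ‖a j‖) ≤ (1 / 2 ^ j : ℝ) * 1 := by
          gcongr
          rw [inv_mul_le_iff₀ (by positivity : (0:ℝ) < 1 + ‖a j‖), mul_one]
          linarith
      _ = (1 / 2 : ℝ) ^ j := by rw [mul_one, one_div, one_div, inv_pow]
  refine ⟨hsum, fun g hg j => ?_⟩
  obtain ⟨hgsa, hbg, hgb⟩ := hg
  have hle : ((1 / 2 ^ j) * (1 + ‖a j‖)⁻¹ : ℝ) • a j ≤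
      ∑' j : ℕ, ((1 / 2 ^ j) * (1 + ‖a j‖)⁻¹ : ℝ) • a j :=
    hsum.le_tsum j (fun i _ => hcnonneg i)
  obtain ⟨h1, h2⟩ := localUnit_of_le hgsa hbg hgb (hcnonneg j) hle
  refine ⟨hgsa, ?_, ?_⟩
  · have := h1
    rw [smul_mul_assoc] at this
    exact smul_right_injective A (hr j).ne' this
  · have := h2
    rw [mul_smul_comm] at this
    exact smul_right_injective A (hr j).ne' this
end

section
/- Let A be a C*-algebra which is non-unital (has no multiplicative identity) but locally unital. Then A contains no thick element; moreover, for every positive element g ∈ A there exists a state φ on A with φ(g) = 0 (that is, A contains no strictly positive element). -/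
open scoped ComplexOrder

/-- In a non-unital locally unital C*-algebra, every element has a nonzero
right annihilator. -/
lemma NoThick.exists_annihilator {A : Type*} [NonUnitalCStarAlgebra A]
    (hnu : ¬ ∃ e : A, ∀ x : A, e * x = x ∧ x * e = x)
    (hlu : ∀ a : A, ∃ g : A, IsLocalUnit g a) (g : A) :
    ∃ y : A, y ≠ 0 ∧ g * y = 0 := by
  obtain ⟨e, he_sa, hge, heg⟩ := hlu g
  push_neg at hnu
  obtain ⟨x, hx⟩ := hnu e
  by_cases h1 : e * x = x
  · have h2 : x * e ≠ x := fun h => hx h1 h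
    refine ⟨star x - e * star x, ?_, ?_⟩
    · intro h
      apply h2
      have : star (star x - e * star x) = 0 := by rw [h, star_zero]
      rw [star_sub, star_mul, star_star, he_sa.star_eq] at this
      have := sub_eq_zero.mp this
      exact this.symm
    · rw [mul_sub, ← mul_assoc, hge, sub_self]
  · refine ⟨x - e * x, ?_, ?_⟩
    · exact fun h => h1 (sub_eq_zero.mp h).symm
    · rw [mul_sub, ← mul_assoc, hge, sub_self]

/-- The norm of the unit of a unital C*-algebra is at most one (it is zero in the
trivial algebra and one otherwise). -/
lemma NoThick.norm_one_le_one {B : Type*} [CStarAlgebra B] : ‖(1 : B)‖ ≤ 1 := by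
  have h := CStarRing.norm_star_mul_self (x := (1 : B))
  rw [star_one, mul_one] at h
  nlinarith [norm_nonneg (1 : B)]

/-- A functional of norm at most one sending `1` to `1` is real on self-adjoint elements. -/
lemma NoThick.sa_real {B : Type*} [CStarAlgebra B]
    (ψ : B →L[ℂ] ℂ) (h1 : ψ 1 = 1) (hn : ‖ψ‖ ≤ 1)
    {a : B} (ha : IsSelfAdjoint a) : (ψ a).im = 0 := by
  have key : ∀ n : ℝ, 2 * (ψ a).im * n ≤ ‖a‖ ^ 2 := by
    intro n
    set c : ℂ := (n : ℂ) * Complex.I with hc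
    have hψ : ψ (a + c • 1) = ψ a + c := by
      rw [map_add, map_smul, h1, smul_eq_mul, mul_one]
    have hb1 : ‖ψ (a + c • 1)‖ ≤ ‖a + c • 1‖ := by
      calc ‖ψ (a + c • 1)‖ ≤ ‖ψ‖ * ‖a + c • 1‖ := ψ.le_opNorm _
        _ ≤ 1 * ‖a + c • 1‖ := by gcongr
        _ = ‖a + c • 1‖ := one_mul _
    have hstar : star (a + c • 1) = a - c • 1 := by
      rw [star_add, star_smul, star_one, ha.star_eq, hc]
      simp [sub_eq_add_neg, Complex.ext_iff]
    have hcc : -(c * c) = ((n : ℂ) ^ 2) := by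
      rw [hc, mul_mul_mul_comm, Complex.I_mul_I]; ring
    have hmul : star (a + c • 1) * (a + c • 1) = a * a + ((n : ℂ) ^ 2) • 1 := by
      rw [hstar, ← hcc]
      simp [sub_mul, add_mul, mul_add, smul_mul_assoc, mul_smul_comm, smul_smul, smul_add,
        sub_eq_add_neg]
    have hnormsq : ‖a + c • 1‖ ^ 2 ≤ ‖a‖ ^ 2 + n ^ 2 := by
      have h2 := CStarRing.norm_star_mul_self (x := a + c • 1)
      rw [hmul] at h2
      calc ‖a + c • 1‖ ^ 2 = ‖a + c•1‖ * ‖a + c•1‖ := sq _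
        _ = ‖a * a + ((n:ℂ)^2) • 1‖ := h2.symm
        _ ≤ ‖a * a‖ + ‖((n:ℂ)^2) • (1:B)‖ := norm_add_le _ _
        _ ≤ ‖a‖ * ‖a‖ + ‖((n:ℂ)^2)‖ * ‖(1:B)‖ := by
            rw [norm_smul]; gcongr; exact norm_mul_le _ _
        _ ≤ ‖a‖ ^ 2 + n ^ 2 := by
            have hnc : ‖((n:ℂ)^2)‖ = n ^ 2 := by
              simp [norm_pow, Complex.norm_real, Real.norm_eq_abs, sq_abs]
            rw [hnc, ← pow_two]
            nlinarith [NoThick.norm_one_le_one (B := B), sq_nonneg n]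
    have hlhs : ‖ψ (a + c • 1)‖ ^ 2 = (ψ a).re ^ 2 + ((ψ a).im + n) ^ 2 := by
      rw [hψ, Complex.sq_norm]
      simp [Complex.normSq_apply, hc]
      ring
    have h3 : ‖ψ (a + c • 1)‖ ^ 2 ≤ ‖a + c • 1‖ ^ 2 :=
      pow_le_pow_left₀ (norm_nonneg _) hb1 2
    nlinarith [sq_nonneg ((ψ a).re)]
  by_contra h
  have h2 := key ((‖a‖ ^ 2 + 1) / (2 * (ψ a).im))
  rw [mul_div_cancel₀ _ (by simpa using h)] at h2
  linarith

/-- A functional of norm at most one sending `1` to `1` is positive. -/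
lemma NoThick.pos_part {B : Type*} [CStarAlgebra B] [PartialOrder B] [StarOrderedRing B]
    (ψ : B →L[ℂ] ℂ) (h1 : ψ 1 = 1) (hn : ‖ψ‖ ≤ 1)
    {b : B} (hb : 0 ≤ b) : 0 ≤ ψ b := by
  have hb_sa : IsSelfAdjoint b := .of_nonneg hb
  have him : (ψ b).im = 0 := NoThick.sa_real ψ h1 hn hb_sa
  have hle : b ≤ algebraMap ℝ B ‖b‖ := IsSelfAdjoint.le_algebraMap_norm_self hb_sa
  set c : B := algebraMap ℝ B ‖b‖ - b with hcdef
  have hc0 : 0 ≤ c := sub_nonneg.mpr hle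
  have hcle : c ≤ algebraMap ℝ B ‖b‖ := sub_le_self _ hb
  have hnc : ‖c‖ ≤ ‖b‖ := by
    refine (CStarAlgebra.norm_le_norm_of_nonneg_of_le hc0 hcle).trans ?_
    rw [norm_algebraMap]
    have := NoThick.norm_one_le_one (B := B)
    have h2 : ‖(‖b‖)‖ = ‖b‖ := by simp [Real.norm_eq_abs, abs_of_nonneg (norm_nonneg b)]
    rw [h2]
    nlinarith [norm_nonneg b]
  have hψalg : ψ (algebraMap ℝ B ‖b‖) = ((‖b‖ : ℝ) : ℂ) := by
    rw [IsScalarTower.algebraMap_apply ℝ ℂ B, Algebra.algebraMap_eq_smul_one, map_smul, h1,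
      smul_eq_mul, mul_one]
    rfl
  have hψc : ψ c = ((‖b‖ : ℝ) : ℂ) - ψ b := by rw [hcdef, map_sub, hψalg]
  have habs : ‖ψ c‖ ≤ ‖b‖ := by
    refine (ψ.le_opNorm c).trans ?_
    nlinarith [norm_nonneg c]
  have hre : ψ b = (((ψ b).re : ℝ) : ℂ) := Complex.ext rfl (by simp [him])
  have habs2 : |‖b‖ - (ψ b).re| ≤ ‖b‖ := by
    have heq : ψ c = (((‖b‖ - (ψ b).re : ℝ)) : ℂ) := by
      rw [hψc]
      nth_rewrite 1 [hre]
      push_cast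
      ring
    rw [heq] at habs
    rw [Complex.norm_real, Real.norm_eq_abs] at habs
    exact habs
  have : 0 ≤ (ψ b).re := by
    have := abs_le.mp habs2
    linarith [this.2]
  rw [hre]
  exact Complex.zero_le_real.mpr this

/-- Hahn–Banach: a norm-one unital functional attaining the norm of a given
positive element (independent from `1`). -/
lemma NoThick.exists_unital_functional {B : Type*} [CStarAlgebra B] [PartialOrder B]
    [StarOrderedRing B] [Nontrivial B] {p : B} (hp : 0 ≤ p)
    (hind : ∀ α β : ℂ, α • (1 : B) + β • p = 0 → α = 0 ∧ β = 0) :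
    ∃ ψ : B →L[ℂ] ℂ, ‖ψ‖ ≤ 1 ∧ ψ 1 = 1 ∧ ψ p = (‖p‖ : ℂ) := by
  set t : ℝ := ‖p‖ with ht_def
  let T : ℂ × ℂ →ₗ[ℂ] B :=
    { toFun := fun v => v.1 • (1 : B) + v.2 • p
      map_add' := by intro v w; simp [add_smul]; abel
      map_smul' := by intro r v; simp [smul_smul, smul_add] }
  have hT : Function.Injective T := by
    intro v w h
    have h0 : (v.1 - w.1) • (1 : B) + (v.2 - w.2) • p = 0 := by
      simp only [sub_smul]
      have : T v = T w := h
      simp only [T, LinearMap.coe_mk, AddHom.coe_mk] at this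
      rw [sub_add_sub_comm, this, sub_self]
    obtain ⟨h1, h2⟩ := hind _ _ h0
    exact Prod.ext (sub_eq_zero.mp h1) (sub_eq_zero.mp h2)
  set E : Submodule ℂ B := LinearMap.range T with hE
  let eqv : (ℂ × ℂ) ≃ₗ[ℂ] E := LinearEquiv.ofInjective T hT
  haveI : FiniteDimensional ℂ E := Module.Finite.equiv eqv
  let L : ℂ × ℂ →ₗ[ℂ] ℂ :=
    { toFun := fun v => v.1 + v.2 * (t : ℂ)
      map_add' := by intro v w; simp; ring
      map_smul' := by intro r v; simp; ring }
  let f₀ : E →ₗ[ℂ] ℂ := L ∘ₗ eqv.symm.toLinearMap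
  let f : E →L[ℂ] ℂ := LinearMap.toContinuousLinearMap f₀
  have hsymm : ∀ v : ℂ × ℂ, eqv.symm ⟨T v, ⟨v, rfl⟩⟩ = v := by
    intro v
    rw [LinearEquiv.symm_apply_eq]
    exact Subtype.ext rfl
  have hfT : ∀ v : ℂ × ℂ, f ⟨T v, ⟨v, rfl⟩⟩ = v.1 + v.2 * (t : ℂ) := by
    intro v
    show L (eqv.symm ⟨T v, ⟨v, rfl⟩⟩) = _
    rw [hsymm]
    rfl
  have hbound : ∀ v : ℂ × ℂ, ‖v.1 + v.2 * (t : ℂ)‖ ≤ ‖T v‖ := by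
    intro ⟨α, β⟩
    by_cases hβ : β = 0
    · subst hβ
      simp only [T, LinearMap.coe_mk, AddHom.coe_mk, zero_smul, add_zero, zero_mul]
      rw [norm_smul, norm_one]
      simp
    · have ht : (t : ℂ) ∈ spectrum ℂ p := by
        have h1 : t ∈ spectrum ℝ p := CStarAlgebra.norm_mem_spectrum_of_nonneg hp
        simpa using spectrum.algebraMap_mem ℂ h1
      have h2 : β * (t : ℂ) ∈ spectrum ℂ (β • p) := by
        have h := (spectrum.smul_mem_smul_iff (a := p) (s := (t : ℂ))
          (r := Units.mk0 β hβ)).mpr ht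
        simpa [Units.smul_def] using h
      have h3 : α + β * (t : ℂ) ∈ spectrum ℂ (α • (1 : B) + β • p) := by
        rw [← Algebra.algebraMap_eq_smul_one]
        rw [← spectrum.singleton_add_eq]
        exact Set.add_mem_add rfl h2
      exact spectrum.norm_le_norm_of_mem h3
  have hfnorm : ‖f‖ ≤ 1 := by
    refine ContinuousLinearMap.opNorm_le_bound f zero_le_one fun x => ?_
    obtain ⟨v, hv⟩ := x.2
    have hx : x = ⟨T v, ⟨v, rfl⟩⟩ := Subtype.ext hv.symm
    rw [hx, hfT v, one_mul]
    calc ‖v.1 + v.2 * (t : ℂ)‖ ≤ ‖T v‖ := hbound v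
      _ = ‖(⟨T v, ⟨v, rfl⟩⟩ : E)‖ := rfl
  obtain ⟨ψ, hext, hψnorm⟩ := exists_extension_norm_eq E f
  have h1B : (1 : B) = T (1, 0) := by simp [T]
  have hpB : p = T (0, 1) := by simp [T]
  refine ⟨ψ, hψnorm ▸ hfnorm, ?_, ?_⟩
  · have := hext ⟨T (1, 0), ⟨(1, 0), rfl⟩⟩
    rw [hfT (1, 0)] at this
    simpa [← h1B] using this
  · have := hext ⟨T (0, 1), ⟨(0, 1), rfl⟩⟩
    rw [hfT (0, 1)] at this
    simpa [← hpB] using this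

set_option maxHeartbeats 1000000 in
/-- A non-unital, locally unital C*-algebra has no thick element, and no strictly
positive element: every positive element is annihilated by some state. -/
theorem no_thick_no_strictlyPositive {A : Type*} [NonUnitalCStarAlgebra A]
    [PartialOrder A] [StarOrderedRing A]
    (hnu : ¬ ∃ e : A, ∀ x : A, e * x = x ∧ x * e = x)
    (hlu : ∀ a : A, ∃ g : A, IsLocalUnit g a) :
    (∀ g : A, ¬ ∀ x : A, g * x = 0 → x = 0) ∧
    (∀ g : A, 0 ≤ g → ∃ φ : A →L[ℂ] ℂ, IsState φ ∧ φ g = 0) := by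
  constructor
  · intro g hthick
    obtain ⟨y, hy, hgy⟩ := NoThick.exists_annihilator hnu hlu g
    exact hy (hthick y hgy)
  · intro g hg
    obtain ⟨y, hy, hgy⟩ := NoThick.exists_annihilator hnu hlu g
    have hg_sa : IsSelfAdjoint g := .of_nonneg hg
    set p : A := y * star y with hpdef
    have hp0 : p ≠ 0 := by
      intro h
      apply hy
      have hns := CStarRing.norm_self_mul_star (x := y)
      rw [← hpdef, h, norm_zero] at hns
      have : ‖y‖ = 0 := by nlinarith [norm_nonneg y]
      exact norm_eq_zero.mp this
    have hppos : 0 ≤ p := mul_star_self_nonneg y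
    have hp_sa : IsSelfAdjoint p := .of_nonneg hppos
    have hgp : g * p = 0 := by rw [hpdef, ← mul_assoc, hgy, zero_mul]
    have hpg : p * g = 0 := by
      have h1 : star y * g = 0 := by
        have h2 := congrArg star hgy
        rwa [star_mul, hg_sa.star_eq, star_zero] at h2
      rw [hpdef, mul_assoc, h1, mul_zero]
    -- pass to the unitization
    have hpB : (0 : Unitization ℂ A) ≤ (p : Unitization ℂ A) :=
      Unitization.inr_nonneg_iff.mpr hppos
    have hind : ∀ α β : ℂ, α • (1 : Unitization ℂ A) + β • (p : Unitization ℂ A) = 0 →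
        α = 0 ∧ β = 0 := by
      intro α β h
      have hfst := congrArg (fun x : Unitization ℂ A => x.fst) h
      have hsnd := congrArg (fun x : Unitization ℂ A => x.snd) h
      simp at hfst hsnd
      exact ⟨hfst, hsnd.resolve_right hp0⟩
    obtain ⟨ψ, hψn, hψ1, hψp⟩ := NoThick.exists_unital_functional hpB hind
    have hpos : ∀ b : Unitization ℂ A, 0 ≤ b → 0 ≤ ψ b :=
      fun b hb => NoThick.pos_part ψ hψ1 hψn hb
    set t : ℝ := ‖p‖ with htdef
    have htB : ‖(p : Unitization ℂ A)‖ = t := Unitization.norm_inr ..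
    have ht0 : 0 < t := by simpa [htdef] using norm_pos_iff.mpr hp0
    rw [htB] at hψp
    set c : Unitization ℂ A := (t : ℂ) • 1 - (p : Unitization ℂ A) with hcdef
    have hc_sa : star c = c := by
      rw [hcdef, star_sub, star_smul, star_one, ← Unitization.inr_star, hp_sa.star_eq]
      congr 1
      simp [Complex.ext_iff]
    -- ψ (c * c) = 0
    have hcc_exp : c * c = ((t : ℂ)^2) • (1 : Unitization ℂ A)
        - (2 * (t : ℂ)) • (p : Unitization ℂ A)
        + (p : Unitization ℂ A) * (p : Unitization ℂ A) := by
      have e1 : ((t : ℂ) • (1 : Unitization ℂ A)) * (p : Unitization ℂ A)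
          = (t : ℂ) • (p : Unitization ℂ A) := by rw [smul_mul_assoc, one_mul]
      have e2 : (p : Unitization ℂ A) * ((t : ℂ) • (1 : Unitization ℂ A))
          = (t : ℂ) • (p : Unitization ℂ A) := by rw [mul_smul_comm, mul_one]
      have e3 : ((t : ℂ) • (1 : Unitization ℂ A)) * ((t : ℂ) • (1 : Unitization ℂ A))
          = ((t : ℂ)^2) • (1 : Unitization ℂ A) := by
        rw [smul_mul_assoc, mul_smul_comm, one_mul, smul_smul, sq]
      rw [hcdef, sub_mul, mul_sub, mul_sub, e1, e2, e3, two_mul, add_smul]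
      abel
    have hψpp_re : (ψ ((p : Unitization ℂ A) * (p : Unitization ℂ A))).re ≤ t ^ 2 := by
      have h1 : ‖ψ ((p : Unitization ℂ A) * (p : Unitization ℂ A))‖ ≤ t ^ 2 := by
        refine (ψ.le_opNorm _).trans ?_
        have h2 : ‖(p : Unitization ℂ A) * (p : Unitization ℂ A)‖ ≤ t ^ 2 := by
          rw [sq]
          calc ‖(p : Unitization ℂ A) * (p : Unitization ℂ A)‖
              ≤ ‖(p : Unitization ℂ A)‖ * ‖(p : Unitization ℂ A)‖ := norm_mul_le _ _
            _ = t * t := by rw [htB]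
        nlinarith [norm_nonneg ((p : Unitization ℂ A) * (p : Unitization ℂ A)), sq_nonneg t]
      calc (ψ ((p : Unitization ℂ A) * (p : Unitization ℂ A))).re
            ≤ ‖ψ ((p : Unitization ℂ A) * (p : Unitization ℂ A))‖ := Complex.re_le_norm _
        _ ≤ t ^ 2 := h1
    have hccre : (ψ (c * c)).re ≤ 0 := by
      have hval : ψ (c * c) = ((t^2 - 2*t*t : ℝ) : ℂ)
          + ψ ((p : Unitization ℂ A) * (p : Unitization ℂ A)) := by
        rw [hcc_exp, map_add, map_sub, map_smul, map_smul, hψ1, hψp, smul_eq_mul, smul_eq_mul]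
        push_cast
        ring
      rw [hval, Complex.add_re, Complex.ofReal_re]
      nlinarith [hψpp_re]
    have hcc0 : 0 ≤ ψ (c * c) := by
      have := star_mul_self_nonneg c
      rw [hc_sa] at this
      exact hpos _ this
    have hψcc : ψ (c * c) = 0 := by
      obtain ⟨h1, h2⟩ := Complex.le_def.mp hcc0
      have h1' : 0 ≤ (ψ (c * c)).re := by simpa using h1
      have h2' : (ψ (c * c)).im = 0 := by simpa using h2.symm
      apply Complex.ext
      · simp only [Complex.zero_re]
        linarith [hccre]
      · simpa using h2'
    -- conjugation estimate: 0 ≤ ψ (c * g * c) ≤ ‖g‖ ψ (c²) = 0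
    have hgB : (0 : Unitization ℂ A) ≤ (g : Unitization ℂ A) :=
      Unitization.inr_nonneg_iff.mpr hg
    have hgB_sa : IsSelfAdjoint ((g : Unitization ℂ A)) := .of_nonneg hgB
    set r : ℝ := ‖(g : Unitization ℂ A)‖ with hrdef
    have hgle : (g : Unitization ℂ A) ≤ algebraMap ℝ (Unitization ℂ A) r :=
      IsSelfAdjoint.le_algebraMap_norm_self hgB_sa
    have hconj : star c * (g : Unitization ℂ A) * c
        ≤ star c * algebraMap ℝ (Unitization ℂ A) r * c :=
      star_left_conjugate_le_conjugate hgle c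
    have halg : algebraMap ℝ (Unitization ℂ A) r = ((r : ℂ)) • (1 : Unitization ℂ A) := by
      rw [IsScalarTower.algebraMap_apply ℝ ℂ (Unitization ℂ A),
        Algebra.algebraMap_eq_smul_one, Complex.coe_algebraMap]
    have hrhs : star c * algebraMap ℝ (Unitization ℂ A) r * c = ((r : ℂ)) • (c * c) := by
      rw [hc_sa, halg, mul_smul_comm, mul_one, smul_mul_assoc]
    have hcgc0 : 0 ≤ ψ (star c * (g : Unitization ℂ A) * c) := by
      apply hpos
      calc (0 : Unitization ℂ A) = star c * 0 * c := by simp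
        _ ≤ star c * (g : Unitization ℂ A) * c := star_left_conjugate_le_conjugate hgB c
    have hcgc_le : ψ (star c * (g : Unitization ℂ A) * c) ≤ 0 := by
      have h1 : 0 ≤ ψ (star c * algebraMap ℝ (Unitization ℂ A) r * c
          - star c * (g : Unitization ℂ A) * c) := hpos _ (sub_nonneg.mpr hconj)
      rw [map_sub, hrhs, map_smul, hψcc, smul_zero] at h1
      rw [← sub_nonneg]
      simpa using h1
    have hcgc : ψ (star c * (g : Unitization ℂ A) * c) = 0 := le_antisymm hcgc_le hcgc0
    -- c * g * c = t² g
    have hkey : star c * (g : Unitization ℂ A) * c = ((t : ℂ)^2) • (g : Unitization ℂ A) := by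
      rw [hc_sa, hcdef]
      have h1 : (p : Unitization ℂ A) * (g : Unitization ℂ A) = 0 := by
        rw [← Unitization.inr_mul, hpg, Unitization.inr_zero]
      have h2 : (g : Unitization ℂ A) * (p : Unitization ℂ A) = 0 := by
        rw [← Unitization.inr_mul, hgp, Unitization.inr_zero]
      simp [sub_mul, mul_sub, smul_mul_assoc, mul_smul_comm, smul_smul, h1, h2, sq]
      norm_cast
    have hψg : ψ ((g : Unitization ℂ A)) = 0 := by
      have h1 : ((t : ℂ)^2) • ψ ((g : Unitization ℂ A)) = 0 := by
        rw [← map_smul, ← hkey, hcgc]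
      rcases smul_eq_zero.mp h1 with h | h
      · exfalso
        have : (t : ℂ) ≠ 0 := by simpa using ht0.ne'
        exact (pow_ne_zero 2 this) h
      · exact h
    -- restrict to A
    let inrL : A →L[ℂ] Unitization ℂ A :=
      ⟨((Unitization.inrNonUnitalAlgHom ℂ A : A →ₗ[ℂ] Unitization ℂ A)), Unitization.continuous_inr⟩
    refine ⟨ψ.comp inrL, ⟨?_, ?_⟩, ?_⟩
    · -- norm 1
      apply le_antisymm
      · refine ContinuousLinearMap.opNorm_le_bound _ zero_le_one fun x => ?_
        calc ‖ψ (x : Unitization ℂ A)‖ ≤ ‖ψ‖ * ‖(x : Unitization ℂ A)‖ := ψ.le_opNorm _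
          _ ≤ 1 * ‖x‖ := by rw [Unitization.norm_inr]; gcongr
      · have h1 : ‖(ψ.comp inrL) p‖ = t := by
          show ‖ψ ((p : Unitization ℂ A))‖ = t
          rw [hψp]
          simp [Complex.norm_real, Real.norm_eq_abs, abs_of_pos ht0]
        have h2 := (ψ.comp inrL).le_opNorm p
        rw [h1] at h2
        have h3 : ‖p‖ = t := rfl
        rw [h3] at h2
        nlinarith [h2, ht0]
    · -- positivity
      intro a ha
      exact hpos _ (Unitization.inr_nonneg_iff.mpr ha)
    · exact hψg
end

section
/- Let A be a C*-algebra and let (φ_m)_{m∈ℕ} be a sequence of states on A. Then there exists a positive element g ∈ A which is a support of every φ_m, i.e. for every m ∈ ℕ and every x ∈ A, gx = 0 implies φ_m(x) = 0. -/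
open scoped ComplexOrder

/-- If `0 ≤ g` and `star x * g * x = 0`, then `g * x = 0`. -/
lemma mul_eq_zero_of_conj_eq_zero {A : Type*} [NonUnitalCStarAlgebra A]
    [PartialOrder A] [StarOrderedRing A] {g x : A} (hg : 0 ≤ g)
    (h : star x * g * x = 0) : g * x = 0 := by
  set s := CFC.sqrt g with hs
  have hsa : IsSelfAdjoint s := (CFC.sqrt_nonneg (a := g)).isSelfAdjoint
  have hss : s * s = g := CFC.sqrt_mul_sqrt_self g hg
  have hx : s * x = 0 := by
    rw [← CStarRing.star_mul_self_eq_zero_iff, star_mul, hsa.star_eq, mul_assoc, ← mul_assoc s s x,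
      hss, ← mul_assoc, h]
  calc g * x = s * (s * x) := by rw [← mul_assoc, hss]
    _ = 0 := by rw [hx, mul_zero]

/-- Given a sequence of states on a C*-algebra (in which every state admits a positive
support element), there is a single positive element which is a common support. -/
theorem exists_common_support {A : Type*} [NonUnitalCStarAlgebra A]
    [PartialOrder A] [StarOrderedRing A]
    (hsupp : ∀ φ : A →L[ℂ] ℂ, IsState φ →
      ∃ g : A, 0 ≤ g ∧ ∀ x : A, g * x = 0 → φ x = 0)
    (φ : ℕ → A →L[ℂ] ℂ) (hφ : ∀ m : ℕ, IsState (φ m)) :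
    ∃ g : A, 0 ≤ g ∧ ∀ (m : ℕ) (x : A), g * x = 0 → φ m x = 0 := by
  choose g hg hgs using fun m => hsupp (φ m) (hφ m)
  set c : ℕ → ℝ := fun m => (1/2 : ℝ) ^ m / (1 + ‖g m‖) with hc
  have hcpos : ∀ m, 0 < c m := fun m =>
    div_pos (pow_pos (by norm_num) m) (by positivity)
  set f : ℕ → A := fun m => c m • g m with hf
  have hf0 : ∀ m, 0 ≤ f m := fun m => smul_nonneg (hcpos m).le (hg m)
  have hsum : Summable f := by
    apply Summable.of_norm_bounded (g := fun m => (1/2 : ℝ) ^ m)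
      (summable_geometric_of_lt_one (by norm_num) (by norm_num))
    intro m
    rw [hf, norm_smul, Real.norm_eq_abs, abs_of_pos (hcpos m), hc]
    calc (1/2 : ℝ) ^ m / (1 + ‖g m‖) * ‖g m‖
        ≤ (1/2 : ℝ) ^ m / (1 + ‖g m‖) * (1 + ‖g m‖) := by
          apply mul_le_mul_of_nonneg_left (by linarith) (by positivity)
      _ = (1/2 : ℝ) ^ m := by field_simp
  refine ⟨∑' m, f m, tsum_nonneg hf0, fun m x hx => ?_⟩
  have hle : f m ≤ ∑' n, f n := Summable.le_tsum hsum m fun j _ => hf0 j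
  have hconj : star x * f m * x = 0 := by
    have h1 : star x * f m * x ≤ star x * (∑' n, f n) * x := star_left_conjugate_le_conjugate hle x
    have h2 : star x * (∑' n, f n) * x = 0 := by rw [mul_assoc, hx, mul_zero]
    have h0 : (0 : A) ≤ star x * f m * x := by
      simpa using star_left_conjugate_le_conjugate (hf0 m) x
    exact le_antisymm (h2 ▸ h1) h0
  have hgx : star x * g m * x = 0 := by
    have : c m • (star x * g m * x) = 0 := by
      rw [← hconj, hf]; simp [mul_smul_comm, smul_mul_assoc]
    exact (smul_eq_zero_iff_right (ne_of_gt (hcpos m))).mp this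
  exact hgs m x (mul_eq_zero_of_conj_eq_zero (hg m) hgx)
end

section
/- Let A be a C*-algebra and let (x_j)_{j∈J} be a frame in A viewed as a Hilbert module over itself. Then the net of finite partial sums of Σ_j x_j x_j* is bounded in norm: there exists a constant M such that ‖Σ_{j∈F} x_j x_j*‖ ≤ M for every finite subset F ⊆ J. -/
open scoped ComplexOrder

/-- `(x j)_{j ∈ J}` is a frame (state criterion) with frame bounds `c₁, c₂` for the
C*-algebra `A` viewed as a Hilbert module over itself, where `⟪a, b⟫ = a* b`. -/
def IsFrame {A : Type*} [NonUnitalCStarAlgebra A] [PartialOrder A] [StarOrderedRing A]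
    {J : Type*} (x : J → A) (c₁ c₂ : ℝ) : Prop :=
  0 < c₁ ∧ 0 < c₂ ∧
  ∀ (y : A) (φ : A →L[ℂ] ℂ), IsState φ →
    Summable (fun j => φ (star y * (x j * star (x j)) * y)) ∧
    (c₁ : ℂ) * φ (star y * y) ≤ ∑' j, φ (star y * (x j * star (x j)) * y) ∧
    ∑' j, φ (star y * (x j * star (x j)) * y) ≤ (c₂ : ℂ) * φ (star y * y)


lemma aux_im_eq_zero {B : Type*} [CStarAlgebra B] [Nontrivial B] (g : B →L[ℂ] ℂ) (hg : ‖g‖ ≤ 1)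
    (h1 : g 1 = 1) {a : B} (ha : IsSelfAdjoint a) : (g a).im = 0 := by
  set v := (g a).im with hv
  have key : ∀ t : ℝ, (v + t) ^ 2 ≤ ‖a‖ ^ 2 + t ^ 2 := by
    intro t
    set z : ℂ := (t : ℂ) * Complex.I with hz
    set c : B := a + z • 1 with hc
    have hzz : z * z = -((t : ℂ) ^ 2) := by
      rw [hz]; ring_nf; rw [Complex.I_sq]; ring
    have hstar : star c * c = a * a + ((t : ℂ) ^ 2) • (1 : B) := by
      have hsc : star c = a - z • 1 := by
        rw [hc, star_add, ha.star_eq, star_smul, star_one, sub_eq_add_neg, ← neg_smul]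
        congr 1
        rw [hz]
        simp [Complex.ext_iff]
      rw [hsc, hc]
      simp only [sub_mul, add_mul, mul_add, mul_sub, smul_add, smul_sub, mul_smul_comm, mul_one,
        smul_mul_assoc, one_mul, smul_smul, hzz, neg_smul]
      abel
    have hnormc : ‖c‖ ^ 2 ≤ ‖a‖ ^ 2 + t ^ 2 := by
      have h1' : ‖c‖ ^ 2 = ‖star c * c‖ := by
        rw [CStarRing.norm_star_mul_self, sq]
      rw [h1', hstar]
      refine (norm_add_le _ _).trans ?_
      have h2' : ‖a * a‖ = ‖a‖ ^ 2 := by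
        nth_rewrite 1 [← ha.star_eq]
        rw [CStarRing.norm_star_mul_self, sq]
      rw [h2', norm_smul, norm_one, mul_one]
      simp [sq_abs]
    have hgc : g c = g a + z := by
      rw [hc, map_add, map_smul, h1, smul_eq_mul, mul_one]
    have him : (g c).im = v + t := by
      rw [hgc, Complex.add_im, hz]
      simp [hv]
    have habs : ‖g c‖ ≤ ‖c‖ := by
      calc ‖g c‖ ≤ ‖g‖ * ‖c‖ := g.le_opNorm c
        _ ≤ 1 * ‖c‖ := by gcongr
        _ = ‖c‖ := one_mul _
    calc (v + t) ^ 2 = |(g c).im| ^ 2 := by rw [him, sq_abs]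
      _ ≤ ‖g c‖ ^ 2 := pow_le_pow_left₀ (abs_nonneg _) (Complex.abs_im_le_norm _) 2
      _ ≤ ‖c‖ ^ 2 := by gcongr
      _ ≤ ‖a‖ ^ 2 + t ^ 2 := hnormc
  by_contra hv0
  have key2 : ∀ t : ℝ, 2 * v * t ≤ ‖a‖ ^ 2 - v ^ 2 := fun t => by nlinarith [key t]
  have h3 := key2 ((‖a‖ ^ 2 - v ^ 2 + 1) / (2 * v))
  rw [mul_div_cancel₀ _ (mul_ne_zero two_ne_zero hv0)] at h3
  linarith

lemma aux_nonneg {B : Type*} [CStarAlgebra B] [Nontrivial B] [PartialOrder B]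
    [StarOrderedRing B] (g : B →L[ℂ] ℂ) (hg : ‖g‖ ≤ 1) (h1 : g 1 = 1)
    {a : B} (ha : 0 ≤ a) : 0 ≤ g a := by
  have hsa : IsSelfAdjoint a := .of_nonneg ha
  have him : (g a).im = 0 := aux_im_eq_zero g hg h1 hsa
  set d : B := algebraMap ℝ B ‖a‖ - a with hd
  have haM : a ≤ algebraMap ℝ B ‖a‖ :=
    (CStarAlgebra.norm_le_iff_le_algebraMap a (norm_nonneg a) ha).mp le_rfl
  have hd0 : 0 ≤ d := sub_nonneg.mpr haM
  have hdnorm : ‖d‖ ≤ ‖a‖ := by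
    rw [CStarAlgebra.norm_le_iff_le_algebraMap d (norm_nonneg a) hd0, hd]
    exact sub_le_self _ ha
  have hgd : g d = (‖a‖ : ℂ) - g a := by
    rw [hd, map_sub]
    congr 1
    rw [Algebra.algebraMap_eq_smul_one, ← algebraMap_smul ℂ ‖a‖ (1 : B), map_smul, h1]
    simp
  have habs : ‖g d‖ ≤ ‖a‖ := by
    calc ‖g d‖ ≤ ‖g‖ * ‖d‖ := g.le_opNorm d
      _ ≤ 1 * ‖a‖ := by gcongr
      _ = ‖a‖ := one_mul _
  have hre : ‖a‖ - (g a).re ≤ ‖a‖ := by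
    have h2 : (g d).re ≤ ‖g d‖ := Complex.re_le_norm _
    have h3 : (g d).re = ‖a‖ - (g a).re := by rw [hgd]; simp
    linarith
  rw [Complex.nonneg_iff]
  constructor
  · linarith
  · exact him.symm

set_option maxHeartbeats 1000000 in
set_option synthInstance.maxHeartbeats 400000 in
lemma exists_state_apply_eq_norm {A : Type*} [NonUnitalCStarAlgebra A] [PartialOrder A]
    [StarOrderedRing A] {a : A} (ha : 0 ≤ a) (ha0 : a ≠ 0) :
    ∃ φ : A →L[ℂ] ℂ, IsState φ ∧ φ a = (‖a‖ : ℂ) := by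
  have hb : (0 : Unitization ℂ A) ≤ (a : Unitization ℂ A) := Unitization.inr_nonneg_iff.mpr ha
  have hbsa : IsSelfAdjoint (a : Unitization ℂ A) := .of_nonneg hb
  haveI : IsStarNormal (a : Unitization ℂ A) := hbsa.isStarNormal
  have hspec : ((‖(a : Unitization ℂ A)‖ : ℝ) : ℂ) ∈ spectrum ℂ (a : Unitization ℂ A) := by
    have h := CStarAlgebra.norm_mem_spectrum_of_nonneg hb
    simpa using spectrum.algebraMap_mem ℂ h
  obtain ⟨φ, hφ⟩ :=
    (StarAlgebra.elemental.bijective_characterSpaceToSpectrum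
      (a : Unitization ℂ A)).surjective ⟨_, hspec⟩
  have hφa : φ ⟨(a : Unitization ℂ A), StarAlgebra.elemental.self_mem ℂ _⟩
      = ((‖(a : Unitization ℂ A)‖ : ℝ) : ℂ) := congrArg Subtype.val hφ
  haveI : Nontrivial (StarAlgebra.elemental ℂ (a : Unitization ℂ A)) := by
    refine nontrivial_of_ne 0 1 fun h => ?_
    exact zero_ne_one (α := Unitization ℂ A) (congrArg Subtype.val h)
  have hφle : ∀ z : StarAlgebra.elemental ℂ (a : Unitization ℂ A), ‖φ z‖ ≤ ‖z‖ :=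
    fun z => AlgHom.norm_apply_le_self φ z
  set p : Subspace ℂ (Unitization ℂ A) :=
    Subalgebra.toSubmodule (StarAlgebra.elemental ℂ (a : Unitization ℂ A)).toSubalgebra with hp
  let f₀ : p →ₗ[ℂ] ℂ :=
    { toFun := fun x => φ ⟨x.1, x.2⟩
      map_add' := fun x y => by rw [← map_add]; rfl
      map_smul' := fun c x => by rw [← map_smul]; rfl }
  have hf₀ : ∀ x : p, ‖f₀ x‖ ≤ 1 * ‖x‖ := by
    intro x
    rw [one_mul]
    exact hφle ⟨x.1, x.2⟩
  let f : p →L[ℂ] ℂ := LinearMap.mkContinuous f₀ 1 hf₀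
  obtain ⟨g, hgext, hgnorm⟩ := exists_extension_norm_eq p f
  have hgle : ‖g‖ ≤ 1 := by
    rw [hgnorm]
    exact LinearMap.mkContinuous_norm_le f₀ zero_le_one _
  have g1 : g 1 = 1 := by
    have h := hgext ⟨1, Subalgebra.one_mem _⟩
    have h2 : f ⟨1, Subalgebra.one_mem _⟩
        = φ (1 : StarAlgebra.elemental ℂ (a : Unitization ℂ A)) := rfl
    have h3 : φ (1 : StarAlgebra.elemental ℂ (a : Unitization ℂ A)) = 1 := map_one φ
    rw [h2, h3] at h
    exact h
  have hmem : (a : Unitization ℂ A) ∈ p := StarAlgebra.elemental.self_mem ℂ _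
  have hga : g (a : Unitization ℂ A) = ((‖a‖ : ℝ) : ℂ) := by
    have h := hgext ⟨(a : Unitization ℂ A), hmem⟩
    have h2 : f ⟨(a : Unitization ℂ A), hmem⟩
        = φ ⟨(a : Unitization ℂ A), StarAlgebra.elemental.self_mem ℂ _⟩ := rfl
    rw [h2, hφa, Unitization.norm_inr] at h
    exact h
  let ι : A →L[ℂ] Unitization ℂ A :=
    ⟨Unitization.inrHom ℂ ℂ A, Unitization.isometry_inr.continuous⟩
  set ψ : A →L[ℂ] ℂ := g.comp ι with hψ
  have hψapp : ∀ x : A, ψ x = g (x : Unitization ℂ A) := fun _ => rfl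
  have hψa : ψ a = (‖a‖ : ℂ) := by rw [hψapp, hga]
  have hψpos : ∀ x : A, 0 ≤ x → 0 ≤ ψ x := fun x hx => by
    rw [hψapp]
    exact aux_nonneg g hgle g1 (Unitization.inr_nonneg_iff.mpr hx)
  have hψnorm : ‖ψ‖ = 1 := by
    have hle : ‖ψ‖ ≤ 1 := by
      refine ContinuousLinearMap.opNorm_le_bound ψ zero_le_one fun x => ?_
      rw [hψapp]
      calc ‖g (x : Unitization ℂ A)‖ ≤ ‖g‖ * ‖(x : Unitization ℂ A)‖ := g.le_opNorm _
        _ ≤ 1 * ‖x‖ := by rw [Unitization.norm_inr]; gcongr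
    have hge : 1 ≤ ‖ψ‖ := by
      have h1' : ‖ψ a‖ = ‖a‖ := by rw [hψa]; simp [abs_of_nonneg (norm_nonneg a)]
      have h2' : ‖ψ a‖ ≤ ‖ψ‖ * ‖a‖ := ψ.le_opNorm a
      have h3' : 0 < ‖a‖ := norm_pos_iff.mpr ha0
      nlinarith
    linarith
  exact ⟨ψ, ⟨hψnorm, hψpos⟩, hψa⟩

/-- For a frame `(x j)` in a C*-algebra `A` (as a Hilbert module over itself), the net of
finite partial sums of `Σ_j x_j x_j*` is bounded in norm. -/
theorem frame_partial_sums_bounded {A : Type*} [NonUnitalCStarAlgebra A]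
    [PartialOrder A] [StarOrderedRing A] {J : Type*} (x : J → A) (c₁ c₂ : ℝ)
    (hx : IsFrame x c₁ c₂) :
    ∃ M : ℝ, ∀ F : Finset J, ‖∑ j ∈ F, x j * star (x j)‖ ≤ M := by
  obtain ⟨hc₁, hc₂, hframe⟩ := hx
  refine ⟨c₂, fun F => ?_⟩
  set S : A := ∑ j ∈ F, x j * star (x j) with hSdef
  have hS0 : 0 ≤ S := Finset.sum_nonneg fun j _ => mul_star_self_nonneg (x j)
  by_cases hS : S = 0
  · rw [hS]
    simpa using hc₂.le
  have hSsa : IsSelfAdjoint S := .of_nonneg hS0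
  have hSSnorm : ‖S * S‖ = ‖S‖ ^ 2 := by
    nth_rewrite 1 [← hSsa.star_eq]
    rw [CStarRing.norm_star_mul_self, sq]
  have hSS0 : 0 ≤ S * S := by
    nth_rewrite 1 [← hSsa.star_eq]
    exact star_mul_self_nonneg S
  have hSS_ne : S * S ≠ 0 := by
    intro h
    have : ‖S‖ ^ 2 = 0 := by rw [← hSSnorm, h, norm_zero]
    exact hS (norm_eq_zero.mp (by nlinarith))
  obtain ⟨φ, hφstate, hφval⟩ := exists_state_apply_eq_norm hSS0 hSS_ne
  set y : A := CFC.sqrt S with hydef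
  have hy0 : 0 ≤ y := CFC.sqrt_nonneg S
  have hysa : star y = y := (IsSelfAdjoint.of_nonneg hy0).star_eq
  have hyy : y * y = S := CFC.sqrt_mul_sqrt_self S hS0
  obtain ⟨hsum, _, hup⟩ := hframe y φ hφstate
  have keysum : ∑ j ∈ F, φ (star y * (x j * star (x j)) * y) = φ (S * S) := by
    rw [← map_sum]
    congr 1
    rw [← Finset.sum_mul, ← Finset.mul_sum, ← hSdef, hysa, ← hyy]
    noncomm_ring
  have htj : ∀ j, 0 ≤ φ (star y * (x j * star (x j)) * y) := by
    intro j
    have h1 : star y * (x j * star (x j)) * y = star (star (x j) * y) * (star (x j) * y) := by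
      rw [star_mul, star_star, hysa]
      noncomm_ring
    rw [h1]
    exact hφstate.2 _ (star_mul_self_nonneg _)
  have hsumF : φ (S * S) ≤ ∑' j, φ (star y * (x j * star (x j)) * y) := by
    rw [← keysum]
    exact Summable.sum_le_tsum F (fun j _ => htj j) hsum
  have hyyS : φ (star y * y) = φ S := by rw [hysa, hyy]
  have hchain : ((‖S‖ ^ 2 : ℝ) : ℂ) ≤ (c₂ : ℂ) * φ S := by
    calc ((‖S‖ ^ 2 : ℝ) : ℂ) = φ (S * S) := by rw [hφval, hSSnorm]
      _ ≤ ∑' j, φ (star y * (x j * star (x j)) * y) := hsumF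
      _ ≤ (c₂ : ℂ) * φ (star y * y) := hup
      _ = (c₂ : ℂ) * φ S := by rw [hyyS]
  have hφS0 : 0 ≤ φ S := hφstate.2 S hS0
  have him : (φ S).im = 0 := ((Complex.nonneg_iff.mp hφS0).2).symm
  have hre : 0 ≤ (φ S).re := (Complex.nonneg_iff.mp hφS0).1
  have hreS : (φ S).re ≤ ‖S‖ := by
    have h1 : (φ S).re ≤ ‖φ S‖ := Complex.re_le_norm _
    have h2 : ‖φ S‖ ≤ ‖φ‖ * ‖S‖ := φ.le_opNorm S
    rw [hφstate.1, one_mul] at h2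
    linarith
  have hfinal : ‖S‖ ^ 2 ≤ c₂ * (φ S).re := by
    have h := (Complex.le_def.mp hchain).1
    simpa [Complex.mul_re, him, ← Complex.ofReal_pow] using h
  have hSpos : 0 < ‖S‖ := norm_pos_iff.mpr hS
  nlinarith
end
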